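/- arXiv:1903.02095 — 9 statements merged into one kernel-verified Lean document; each statement's English description precedes it below -/
import Mathlib

section
/- Neumann's Lemma: An infinite group cannot be covered by finitely many left cosets of subgroups of infinite index. That is, if G is an infinite group, G₁, ..., Gₙ are subgroups of G each of infinite index, and g₁, ..., gₙ ∈ G, then G ≠ ⋃ᵢ gᵢGᵢ. -/
open scoped Pointwise

/-- **Neumann's Lemma**: an infinite group cannot be covered by finitely many left
cosets of subgroups of infinite index. -/
theorem neumann_lemma {G : Type*} [Group G] [Infinite G]
    (n : ℕ) (H : Fin n → Subgroup G) (g : Fin n → G)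
    (hindex : ∀ i, (H i).index = 0) :
    (⋃ i, g i • (H i : Set G)) ≠ Set.univ := by
  intro hcov
  have hcov' : ⋃ i ∈ (Finset.univ : Finset (Fin n)), g i • (H i : Set G) = Set.univ := by
    simpa using hcov
  obtain ⟨k, -, hk⟩ := Subgroup.exists_finiteIndex_of_leftCoset_cover hcov'
  exact hk.index_ne_zero (hindex k)
end

section
/- If a group G has a nontrivial finite conjugacy class, then G admits no ladder: for any scale Λ = (λ, Σ, A) satisfying the exhaustion condition (every group element lies in some Δₙ^{λ(n)}), there exists an element of G with two distinct spike decompositions. -/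
open scoped Pointwise

variable {G : Type*} [Group G]

/-- The set of products of at most `k` elements of `D` (including the empty product). -/
def ball (D : Set G) (k : ℕ) : Set G :=
  {g | ∃ l : List G, (∀ x ∈ l, x ∈ D) ∧ l.length ≤ k ∧ l.prod = g}

/-- `Δₙ`: the union of the spiking sets `Σᵢ` (for `1 ≤ i < n`), the filling sets `Aᵢ`
(for `i < n`), and their inverses. -/
def Delta (S A : ℕ → Set G) (n : ℕ) : Set G :=
  (⋃ i ∈ Set.Ico 1 n, (S i ∪ (S i)⁻¹)) ∪ (⋃ i ∈ Set.Iio n, (A i ∪ (A i)⁻¹))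

/-- A spike decomposition of `g` of height `n`: `g = a·σ·b` with `σ ∈ Σₙ` and
`a, b ∈ Δₙ^{λ(n)}`. -/
def IsSpikeDecomp (lam : ℕ → ℕ) (S A : ℕ → Set G) (g : G) (n : ℕ) (a σ b : G) : Prop :=
  1 ≤ n ∧ σ ∈ S n ∧ a ∈ ball (Delta S A n) (lam n) ∧ b ∈ ball (Delta S A n) (lam n) ∧
    g = a * σ * b


lemma ball_mono {D D' : Set G} {k k' : ℕ} (hD : D ⊆ D') (hk : k ≤ k') :
    ball D k ⊆ ball D' k' := by
  rintro g ⟨l, hl, hlen, hprod⟩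
  exact ⟨l, fun x hx => hD (hl x hx), hlen.trans hk, hprod⟩

lemma Delta_mono (S A : ℕ → Set G) {m n : ℕ} (h : m ≤ n) :
    Delta S A m ⊆ Delta S A n := by
  apply Set.union_subset_union
  · exact Set.biUnion_subset_biUnion_left (Set.Ico_subset_Ico_right h)
  · exact Set.biUnion_subset_biUnion_left (fun i hi => lt_of_lt_of_le hi h)

lemma one_mem_ball (D : Set G) (k : ℕ) : (1 : G) ∈ ball D k :=
  ⟨[], by simp, by simp, by simp⟩

/-- If `G` has a nontrivial finite conjugacy class, then no scale on `G` with the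
exhaustion property has unique spike decompositions: some element admits two distinct
spike decompositions. -/
theorem exists_two_spike_decomps_of_finite_conj_class
    (lam : ℕ → ℕ) (S A : ℕ → Set G)
    (hlam : Monotone lam) (hlamunb : ∀ N, ∃ n, N ≤ lam n)
    (hSne : ∀ n, 1 ≤ n → (S n).Nonempty)
    (hSdisj : ∀ m n, 1 ≤ m → 1 ≤ n → m ≠ n → Disjoint (S m) (S n))
    (hexh : ∀ g : G, ∃ n, 1 ≤ n ∧ g ∈ ball (Delta S A n) (lam n))
    (g₀ : G) (hg₀ : g₀ ≠ 1) (hfin : {x : G | ∃ h : G, h⁻¹ * g₀ * h = x}.Finite) :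
    ∃ (g : G) (n : ℕ) (a σ b : G) (n' : ℕ) (a' σ' b' : G),
      IsSpikeDecomp lam S A g n a σ b ∧ IsSpikeDecomp lam S A g n' a' σ' b' ∧
      (n, a, σ, b) ≠ (n', a', σ', b') := by
  classical
  set C := {x : G | ∃ h : G, h⁻¹ * g₀ * h = x} with hC
  have hmem : ∀ c ∈ C, 1 ≤ (hexh c).choose ∧ c ∈ ball (Delta S A (hexh c).choose) (lam (hexh c).choose) :=
    fun c _ => (hexh c).choose_spec
  set N : ℕ := hfin.toFinset.sup (fun c => (hexh c).choose) with hN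
  have hg₀C : g₀ ∈ C := ⟨1, by simp⟩
  have hball : ∀ c ∈ C, c ∈ ball (Delta S A N) (lam N) := by
    intro c hc
    have hle : (hexh c).choose ≤ N :=
      Finset.le_sup (f := fun c => (hexh c).choose) (hfin.mem_toFinset.mpr hc)
    exact ball_mono (Delta_mono S A hle) (hlam hle) (hmem c hc).2
  have hN1 : 1 ≤ N := le_trans ((hexh g₀).choose_spec.1)
    (Finset.le_sup (f := fun c => (hexh c).choose) (hfin.mem_toFinset.mpr hg₀C))
  obtain ⟨σ, hσ⟩ := hSne N hN1
  refine ⟨g₀ * σ, N, g₀, σ, 1, N, 1, σ, σ⁻¹ * g₀ * σ, ?_, ?_, ?_⟩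
  · exact ⟨hN1, hσ, hball g₀ hg₀C, one_mem_ball _ _, by group⟩
  · exact ⟨hN1, hσ, one_mem_ball _ _, hball _ ⟨σ, rfl⟩, by group⟩
  · intro h
    exact hg₀ (congrArg (fun p => p.2.1) h)
end

section
/- Let Λ = (λ, Σ, A) be a scale on a countable group G such that for every n ≥ 1, the set Σₙ is switching for Δₙ^{5λ(n)}, i.e., Σₙ·Z ∩ Z·Σₙ contains no products σz = z'σ' with (z, z') ≠ (e, e), where Z = Δₙ^{5λ(n)}. Then every g ∈ G admits at most one spike decomposition with respect to Λ. -/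
open scoped Pointwise

variable {G : Type*} [Group G]

lemma mul_mem_ball {D : Set G} {j k : ℕ} {x y : G}
    (hx : x ∈ ball D j) (hy : y ∈ ball D k) : x * y ∈ ball D (j + k) := by
  obtain ⟨l, hl, hlen, hprod⟩ := hx
  obtain ⟨m, hm, hmen, hmprod⟩ := hy
  refine ⟨l ++ m, ?_, ?_, ?_⟩
  · intro z hz; rcases List.mem_append.1 hz with h | h
    · exact hl z h
    · exact hm z h
  · simpa using Nat.add_le_add hlen hmen
  · simp [hprod, hmprod]

lemma mem_ball_of_mem {D : Set G} {k : ℕ} {x : G} (hx : x ∈ D) (hk : 1 ≤ k) :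
    x ∈ ball D k := ⟨[x], by simpa using hx, by simpa using hk, by simp⟩

lemma inv_mem_ball {D : Set G} (hD : ∀ x ∈ D, x⁻¹ ∈ D) {k : ℕ} {x : G}
    (hx : x ∈ ball D k) : x⁻¹ ∈ ball D k := by
  obtain ⟨l, hl, hlen, hprod⟩ := hx
  refine ⟨(l.map Inv.inv).reverse, ?_, by simpa using hlen, ?_⟩
  · intro y hy
    simp only [List.mem_reverse, List.mem_map] at hy
    obtain ⟨z, hz, rfl⟩ := hy
    exact hD z (hl z hz)
  · rw [← hprod, List.prod_inv_reverse]

lemma delta_inv {S A : ℕ → Set G} {n : ℕ} : ∀ x ∈ Delta S A n, x⁻¹ ∈ Delta S A n := by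
  intro x hx
  rcases hx with hx | hx
  · left
    simp only [Set.mem_iUnion] at hx ⊢
    obtain ⟨i, hi, hx⟩ := hx
    refine ⟨i, hi, ?_⟩
    rcases hx with hx | hx
    · exact Or.inr (by simpa using hx)
    · exact Or.inl (by simpa using hx)
  · right
    simp only [Set.mem_iUnion] at hx ⊢
    obtain ⟨i, hi, hx⟩ := hx
    refine ⟨i, hi, ?_⟩
    rcases hx with hx | hx
    · exact Or.inr (by simpa using hx)
    · exact Or.inl (by simpa using hx)

lemma delta_mono {S A : ℕ → Set G} {n n' : ℕ} (h : n ≤ n') :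
    Delta S A n ⊆ Delta S A n' := by
  apply Set.union_subset_union
  · exact Set.biUnion_mono (fun i hi => ⟨hi.1, hi.2.trans_le h⟩) (fun _ _ => le_refl _)
  · exact Set.biUnion_mono (fun i hi => lt_of_lt_of_le hi h) (fun _ _ => le_refl _)

lemma sigma_mem_delta {S A : ℕ → Set G} {n n' : ℕ} (h1 : 1 ≤ n) (h2 : n < n')
    {σ : G} (hσ : σ ∈ S n) : σ ∈ Delta S A n' := by
  left
  exact Set.mem_biUnion ⟨h1, h2⟩ (Or.inl hσ)

/-- if decompositions exist at heights n < n', contradiction. -/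
lemma no_two_heights
    (lam : ℕ → ℕ) (S A : ℕ → Set G)
    (hlam : Monotone lam) (hlampos : ∀ n, 1 ≤ lam n)
    (hS1 : ∀ n, 1 ≤ n → (1 : G) ∉ S n)
    (hsw : ∀ n, 1 ≤ n → ∀ z ∈ ball (Delta S A n) (5 * lam n),
      ∀ z' ∈ ball (Delta S A n) (5 * lam n), ∀ σ ∈ S n, ∀ σ' ∈ S n,
        σ * z = z' * σ' → z = 1 ∧ z' = 1)
    (g : G) (n : ℕ) (a σ b : G) (n' : ℕ) (a' σ' b' : G) (hnn : n < n')
    (h1 : IsSpikeDecomp lam S A g n a σ b) (h2 : IsSpikeDecomp lam S A g n' a' σ' b') :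
    False := by
  obtain ⟨hn1, hσ, ha, hb, hg⟩ := h1
  obtain ⟨hn1', hσ', ha', hb', hg'⟩ := h2
  have hDsub : Delta S A n ⊆ Delta S A n' := delta_mono hnn.le
  have hlamle : lam n ≤ lam n' := hlam hnn.le
  -- g ∈ ball (Δ n') (3 * lam n')
  have hgball : g ∈ ball (Delta S A n') (3 * lam n') := by
    have ha2 : a ∈ ball (Delta S A n') (lam n') := ball_mono hDsub hlamle ha
    have hb2 : b ∈ ball (Delta S A n') (lam n') := ball_mono hDsub hlamle hb
    have hσ2 : σ ∈ ball (Delta S A n') (lam n') :=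
      mem_ball_of_mem (sigma_mem_delta hn1 hnn hσ) (hlampos n')
    have := mul_mem_ball (mul_mem_ball ha2 hσ2) hb2
    rw [hg]
    refine ball_mono (le_refl _) ?_ this
    omega
  -- σ' = a'⁻¹ * g * b'⁻¹ ∈ ball (Δ n') (5 * lam n')
  have hσball : σ' ∈ ball (Delta S A n') (5 * lam n') := by
    have hainv : a'⁻¹ ∈ ball (Delta S A n') (lam n') := inv_mem_ball delta_inv ha'
    have hbinv : b'⁻¹ ∈ ball (Delta S A n') (lam n') := inv_mem_ball delta_inv hb'
    have heq : σ' = a'⁻¹ * g * b'⁻¹ := by rw [hg']; group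
    rw [heq]
    have := mul_mem_ball (mul_mem_ball hainv hgball) hbinv
    refine ball_mono (le_refl _) ?_ this
    omega
  have := hsw n' hn1' σ' hσball σ' hσball σ' hσ' σ' hσ' rfl
  exact hS1 n' hn1' (this.1 ▸ hσ')

/-- If each `Σₙ` is switching for `Δₙ^{5λ(n)}`, then spike decompositions are unique. -/
theorem spike_decomp_unique_of_switching
    (lam : ℕ → ℕ) (S A : ℕ → Set G)
    (hlam : Monotone lam) (hlampos : ∀ n, 1 ≤ lam n)
    (hS1 : ∀ n, 1 ≤ n → (1 : G) ∉ S n)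
    (hsw : ∀ n, 1 ≤ n → ∀ z ∈ ball (Delta S A n) (5 * lam n),
      ∀ z' ∈ ball (Delta S A n) (5 * lam n), ∀ σ ∈ S n, ∀ σ' ∈ S n,
        σ * z = z' * σ' → z = 1 ∧ z' = 1)
    (g : G) (n : ℕ) (a σ b : G) (n' : ℕ) (a' σ' b' : G)
    (h1 : IsSpikeDecomp lam S A g n a σ b) (h2 : IsSpikeDecomp lam S A g n' a' σ' b') :
    n = n' ∧ a = a' ∧ σ = σ' ∧ b = b' := by
  have hnn : n = n' := by
    rcases lt_trichotomy n n' with h | h | h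
    · exact (no_two_heights lam S A hlam hlampos hS1 hsw g n a σ b n' a' σ' b' h h1 h2).elim
    · exact h
    · exact (no_two_heights lam S A hlam hlampos hS1 hsw g n' a' σ' b' n a σ b h h2 h1).elim
  subst hnn
  obtain ⟨hn1, hσ, ha, hb, hg⟩ := h1
  obtain ⟨_, hσ', ha', hb', hg'⟩ := h2
  -- a σ b = a' σ' b'  ⇒  σ (b b'⁻¹) = (a⁻¹ a') σ'
  have key : σ * (b * b'⁻¹) = (a⁻¹ * a') * σ' := by
    have : a * σ * b = a' * σ' * b' := by rw [← hg, ← hg']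
    have := congrArg (fun x => a⁻¹ * x * b'⁻¹) this
    group at this ⊢
    convert this using 1 <;> group
  have hz : b * b'⁻¹ ∈ ball (Delta S A n) (5 * lam n) := by
    have := mul_mem_ball hb (inv_mem_ball delta_inv hb')
    refine ball_mono (le_refl _) ?_ this
    omega
  have hz' : a⁻¹ * a' ∈ ball (Delta S A n) (5 * lam n) := by
    have := mul_mem_ball (inv_mem_ball delta_inv ha) ha'
    refine ball_mono (le_refl _) ?_ this
    omega
  obtain ⟨e1, e2⟩ := hsw n hn1 _ hz _ hz' σ hσ σ' hσ' key
  have hbb : b = b' := by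
    have := e1; rwa [mul_inv_eq_one] at this
  have haa : a = a' := by
    have := e2; rwa [inv_mul_eq_one] at this
  refine ⟨rfl, haa, ?_, hbb⟩
  subst haa; subst hbb
  have : a * σ * b = a * σ' * b := by rw [← hg, ← hg']
  exact mul_left_cancel (mul_right_cancel this)
end

section
/- The despiking graph of a ladder is a forest: in the graph on vertex set G whose edges are the pairs (g, a) where g has (unique) spike decomposition g = a·σ·b, there are no cycles. -/
open scoped Pointwise

variable {G : Type*} [Group G]

open Classical in
/-- The height of an element: the height of its spike decomposition if it has one, else 0. -/
noncomputable def htAux (lam : ℕ → ℕ) (S A : ℕ → Set G) (g : G) : ℕ :=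
  if h : ∃ n a σ b, IsSpikeDecomp lam S A g n a σ b then h.choose else 0

open Classical in
/-- The prefix of an element: the prefix of its spike decomposition if it has one, else 1. -/
noncomputable def preAux (lam : ℕ → ℕ) (S A : ℕ → Set G) (g : G) : G :=
  if h : ∃ n a σ b, IsSpikeDecomp lam S A g n a σ b then h.choose_spec.choose else 1

theorem htAux_preAux_spec (lam : ℕ → ℕ) (S A : ℕ → Set G)
    (huniq : ∀ (g : G) (n : ℕ) (a σ b : G) (n' : ℕ) (a' σ' b' : G),
      IsSpikeDecomp lam S A g n a σ b → IsSpikeDecomp lam S A g n' a' σ' b' →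
      n = n' ∧ a = a' ∧ σ = σ' ∧ b = b')
    {g : G} {n : ℕ} {a σ b : G} (hd : IsSpikeDecomp lam S A g n a σ b) :
    htAux lam S A g = n ∧ preAux lam S A g = a := by
  classical
  have hP : ∃ n a σ b, IsSpikeDecomp lam S A g n a σ b := ⟨n, a, σ, b, hd⟩
  have hd' : IsSpikeDecomp lam S A g hP.choose hP.choose_spec.choose
      hP.choose_spec.choose_spec.choose hP.choose_spec.choose_spec.choose_spec.choose :=
    hP.choose_spec.choose_spec.choose_spec.choose_spec
  obtain ⟨h1, h2, -, -⟩ := huniq g _ _ _ _ _ _ _ _ hd' hd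
  constructor
  · rw [htAux, dif_pos hP]; exact h1
  · rw [preAux, dif_pos hP]; exact h2

/-- The despiking graph of a ladder is a forest (it has no cycles). -/
theorem despiking_graph_isAcyclic
    (lam : ℕ → ℕ) (S A : ℕ → Set G)
    (huniq : ∀ (g : G) (n : ℕ) (a σ b : G) (n' : ℕ) (a' σ' b' : G),
      IsSpikeDecomp lam S A g n a σ b → IsSpikeDecomp lam S A g n' a' σ' b' →
      n = n' ∧ a = a' ∧ σ = σ' ∧ b = b')
    (hdec : ∀ (g : G) (n : ℕ) (a σ b : G), IsSpikeDecomp lam S A g n a σ b →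
      ∀ (m : ℕ) (a' σ' b' : G), IsSpikeDecomp lam S A a m a' σ' b' → m < n) :
    (SimpleGraph.fromRel fun g h : G =>
      ∃ (n : ℕ) (σ b : G), IsSpikeDecomp lam S A g n h σ b).IsAcyclic := by
  classical
  set ht : G → ℕ := htAux lam S A with hht
  set pre : G → G := preAux lam S A with hpre
  set G' : SimpleGraph G := SimpleGraph.fromRel fun g h : G =>
      ∃ (n : ℕ) (σ b : G), IsSpikeDecomp lam S A g n h σ b with hG'
  -- the key edge property
  have edge : ∀ g h : G, (∃ (n : ℕ) (σ b : G), IsSpikeDecomp lam S A g n h σ b) →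
      ht h < ht g ∧ pre g = h := by
    intro g h ⟨n, σ, b, hd⟩
    obtain ⟨e1, e2⟩ := htAux_preAux_spec lam S A huniq hd
    refine ⟨?_, e2⟩
    rw [hht, e1]
    by_cases hPh : ∃ m a' σ' b', IsSpikeDecomp lam S A h m a' σ' b'
    · obtain ⟨m, a', σ', b', hd'⟩ := hPh
      obtain ⟨f1, -⟩ := htAux_preAux_spec lam S A huniq hd'
      rw [f1]
      exact hdec g n h σ b hd m a' σ' b' hd'
    · rw [htAux, dif_neg hPh]
      exact hd.1
  have adj : ∀ g h : G, G'.Adj g h → ht h ≤ ht g → pre g = h := by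
    intro g h hadj hle
    rw [hG', SimpleGraph.fromRel_adj] at hadj
    obtain ⟨hne, hR | hR⟩ := hadj
    · exact (edge g h hR).2
    · exact absurd (edge h g hR).1 (not_lt.mpr hle)
  -- main argument
  suffices key : ∀ (u : G) (q : G'.Walk u u), q.IsCycle →
      (∀ x ∈ q.support, ht x ≤ ht u) → False by
    intro v p hp
    obtain ⟨u, hu, hmax⟩ := p.support.toFinset.exists_max_image ht
      (by simp [SimpleGraph.Walk.support_ne_nil p, List.toFinset_eq_empty_iff,
        Finset.nonempty_iff_ne_empty])
    rw [List.mem_toFinset] at hu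
    refine key u (p.rotate u hu) (hp.rotate hu) ?_
    intro x hx
    rcases eq_or_ne x u with rfl | hxu
    · exact le_refl _
    · apply hmax
      rw [List.mem_toFinset]
      have := SimpleGraph.Walk.support_rotate p u hu
      rw [SimpleGraph.Walk.support_eq_cons (p.rotate u hu), List.mem_cons] at hx
      rcases hx with rfl | hx
      · exact absurd rfl hxu
      · exact List.mem_of_mem_tail (this.mem_iff.mp hx)
  intro u q hq hmax
  cases q with
  | nil => exact hq.ne_nil rfl
  | cons hadj r =>
    rename_i w
    have h3 : 3 ≤ (SimpleGraph.Walk.cons hadj r).length := hq.three_le_length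
    rw [SimpleGraph.Walk.cons_isCycle_iff] at hq
    obtain ⟨hpath, -⟩ := hq
    have hw : pre u = w := adj u w hadj (hmax w (by simp))
    have hnil : ¬ r.reverse.Nil := by
      rw [SimpleGraph.Walk.nil_iff_length_eq, SimpleGraph.Walk.length_reverse]
      intro h0
      simp [SimpleGraph.Walk.length_cons, h0] at h3
    obtain ⟨x, hadj2, r2, hr⟩ := SimpleGraph.Walk.not_nil_iff.mp hnil
    have hxs : x ∈ r.support := by
      have : x ∈ r.reverse.support := by rw [hr]; simp
      rwa [SimpleGraph.Walk.support_reverse, List.mem_reverse] at this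
    have hx : pre u = x := adj u x hadj2 (hmax x (by simp [hxs]))
    have hxw : x = w := hx ▸ hw ▸ rfl
    subst hxw
    have hpath2 : (SimpleGraph.Walk.cons hadj2 r2).IsPath := by
      rw [← hr]; exact hpath.reverse
    have hr2 : r2 = SimpleGraph.Walk.nil :=
      (SimpleGraph.Walk.isPath_iff_eq_nil (p := r2)).mp hpath2.of_cons
    have hlen : r.length = 1 := by
      have := congrArg SimpleGraph.Walk.length hr
      rw [SimpleGraph.Walk.length_reverse, hr2] at this
      simpa using this
    rw [SimpleGraph.Walk.length_cons, hlen] at h3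
    omega
end

section
/- In the despiking forest of a ladder, every connected component contains exactly one unspiked element (an element admitting no spike decomposition). -/
open scoped Pointwise

variable {G : Type*} [Group G]

attribute [local instance] Classical.propDecidable

/-- `g` admits some spike decomposition. -/
def Spiked (lam : ℕ → ℕ) (S A : ℕ → Set G) (g : G) : Prop :=
  ∃ (n : ℕ) (a σ b : G), IsSpikeDecomp lam S A g n a σ b

/-- The height of a spiked element (0 for unspiked ones). -/
noncomputable def ht (lam : ℕ → ℕ) (S A : ℕ → Set G) (g : G) : ℕ :=
  if h : Spiked lam S A g then h.choose else 0

/-- The prefix of a spiked element (itself for unspiked ones). -/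
noncomputable def pref (lam : ℕ → ℕ) (S A : ℕ → Set G) (g : G) : G :=
  if h : Spiked lam S A g then h.choose_spec.choose else g

lemma pref_spec {lam : ℕ → ℕ} {S A : ℕ → Set G} {g : G} (h : Spiked lam S A g) :
    ∃ σ b, IsSpikeDecomp lam S A g (ht lam S A g) (pref lam S A g) σ b := by
  rw [ht, pref, dif_pos h, dif_pos h]
  exact h.choose_spec.choose_spec

/-- Abbreviation for the strict height-decrease hypothesis. -/
def Hdec (lam : ℕ → ℕ) (S A : ℕ → Set G) : Prop :=
  ∀ (g : G) (n : ℕ) (a σ b : G), IsSpikeDecomp lam S A g n a σ b →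
    ∀ (m : ℕ) (a' σ' b' : G), IsSpikeDecomp lam S A a m a' σ' b' → m < n

lemma ht_pref_lt {lam : ℕ → ℕ} {S A : ℕ → Set G} (hdec : Hdec lam S A) {g : G}
    (h : Spiked lam S A g) : ht lam S A (pref lam S A g) < ht lam S A g := by
  obtain ⟨σ, b, hd⟩ := pref_spec h
  by_cases h' : Spiked lam S A (pref lam S A g)
  · obtain ⟨σ', b', hd'⟩ := pref_spec h'
    exact hdec g _ _ _ _ hd _ _ _ _ hd'
  · rw [ht, dif_neg h']
    have h1 : 1 ≤ ht lam S A g := hd.1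
    omega

/-- The root of an element in the despiking forest. -/
noncomputable def root (lam : ℕ → ℕ) (S A : ℕ → Set G) (hdec : Hdec lam S A) (g : G) : G :=
  if h : Spiked lam S A g then root lam S A hdec (pref lam S A g) else g
termination_by ht lam S A g
decreasing_by exact ht_pref_lt hdec h

lemma root_unspiked {lam : ℕ → ℕ} {S A : ℕ → Set G} (hdec : Hdec lam S A) (g : G) :
    ¬ Spiked lam S A (root lam S A hdec g) := by
  generalize hn : ht lam S A g = n
  induction n using Nat.strong_induction_on generalizing g with
  | _ n ih =>
    rw [root]
    split
    · exact ih _ (hn ▸ ht_pref_lt hdec ‹_›) _ rfl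
    · assumption

lemma root_eq_self {lam : ℕ → ℕ} {S A : ℕ → Set G} (hdec : Hdec lam S A) {g : G}
    (h : ¬ Spiked lam S A g) : root lam S A hdec g = g := by
  rw [root, dif_neg h]

lemma ne_pref {lam : ℕ → ℕ} {S A : ℕ → Set G} (hdec : Hdec lam S A) {g : G}
    (h : Spiked lam S A g) : g ≠ pref lam S A g := by
  intro he
  obtain ⟨σ, b, hd⟩ := pref_spec h
  rw [← he] at hd
  exact lt_irrefl _ (hdec g _ _ _ _ hd _ _ _ _ hd)

lemma root_reachable {lam : ℕ → ℕ} {S A : ℕ → Set G} (hdec : Hdec lam S A) (g : G) :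
    (SimpleGraph.fromRel fun x y : G =>
        ∃ (n : ℕ) (σ b : G), IsSpikeDecomp lam S A x n y σ b).Reachable g
      (root lam S A hdec g) := by
  generalize hn : ht lam S A g = n
  induction n using Nat.strong_induction_on generalizing g with
  | _ n ih =>
    rw [root]
    split
    · rename_i h
      have hadj : (SimpleGraph.fromRel fun x y : G =>
          ∃ (n : ℕ) (σ b : G), IsSpikeDecomp lam S A x n y σ b).Adj g (pref lam S A g) := by
        refine ⟨ne_pref hdec h, Or.inl ?_⟩
        obtain ⟨σ, b, hd⟩ := pref_spec h
        exact ⟨_, σ, b, hd⟩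
      exact hadj.reachable.trans (ih _ (hn ▸ ht_pref_lt hdec h) _ rfl)
    · exact SimpleGraph.Reachable.refl g

/-- Every connected component of the despiking forest of a ladder contains exactly one
unspiked element. -/
theorem component_unique_unspiked
    (lam : ℕ → ℕ) (S A : ℕ → Set G)
    (huniq : ∀ (g : G) (n : ℕ) (a σ b : G) (n' : ℕ) (a' σ' b' : G),
      IsSpikeDecomp lam S A g n a σ b → IsSpikeDecomp lam S A g n' a' σ' b' →
      n = n' ∧ a = a' ∧ σ = σ' ∧ b = b')
    (hdec : ∀ (g : G) (n : ℕ) (a σ b : G), IsSpikeDecomp lam S A g n a σ b →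
      ∀ (m : ℕ) (a' σ' b' : G), IsSpikeDecomp lam S A a m a' σ' b' → m < n)
    (g : G) :
    ∃! u : G,
      (SimpleGraph.fromRel fun x y : G =>
        ∃ (n : ℕ) (σ b : G), IsSpikeDecomp lam S A x n y σ b).Reachable g u ∧
      ¬ ∃ (n : ℕ) (a σ b : G), IsSpikeDecomp lam S A u n a σ b := by
  have hdec' : Hdec lam S A := hdec
  -- pref of a spiked element is determined by any decomposition
  have hpref : ∀ (x : G) (n : ℕ) (a σ b : G), IsSpikeDecomp lam S A x n a σ b →
      pref lam S A x = a := by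
    intro x n a σ b hd
    have hx : Spiked lam S A x := ⟨n, a, σ, b, hd⟩
    obtain ⟨σ', b', hd'⟩ := pref_spec hx
    exact (huniq x _ _ _ _ _ _ _ _ hd' hd).2.1
  -- root is invariant along edges
  have hadjroot : ∀ x y : G, (SimpleGraph.fromRel fun x y : G =>
      ∃ (n : ℕ) (σ b : G), IsSpikeDecomp lam S A x n y σ b).Adj x y →
      root lam S A hdec' x = root lam S A hdec' y := by
    intro x y hadj
    obtain ⟨hne, h | h⟩ := hadj
    · obtain ⟨n, σ, b, hd⟩ := h
      have hx : Spiked lam S A x := ⟨n, y, σ, b, hd⟩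
      have : pref lam S A x = y := hpref x n y σ b hd
      rw [root, dif_pos hx, this]
    · obtain ⟨n, σ, b, hd⟩ := h
      have hy : Spiked lam S A y := ⟨n, x, σ, b, hd⟩
      have : pref lam S A y = x := hpref y n x σ b hd
      rw [show root lam S A hdec' y = _ from by rw [root, dif_pos hy, this]]
  -- root is invariant along reachability
  have hreachroot : ∀ x y : G, (SimpleGraph.fromRel fun x y : G =>
      ∃ (n : ℕ) (σ b : G), IsSpikeDecomp lam S A x n y σ b).Reachable x y →
      root lam S A hdec' x = root lam S A hdec' y := by
    intro x y hr
    obtain ⟨w⟩ := hr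
    induction w with
    | nil => rfl
    | cons hadj _ ih => exact (hadjroot _ _ hadj).trans ih
  refine ⟨root lam S A hdec' g, ⟨root_reachable hdec' g, root_unspiked hdec' g⟩, ?_⟩
  rintro v ⟨hrv, hvu⟩
  have := hreachroot g v hrv
  rw [root_eq_self hdec' hvu] at this
  exact this.symm
end

section
/- Let X₁, X₂, ... be i.i.d. ℤ₊-valued random variables with distribution p, and suppose the gauge function λ satisfies the rapid-growth condition λ(n+1) ≥ n + 2(λ(1) + λ(2) + ... + λ(n)) for all n ≥ 1. Then a sequence g_k = g₀σ₁h₁...σ_kh_k with heights n_k = height(σ_k) strictly increasing and with |g₀|_{n₁} ≤ λ(n₁) and |h_j|_{n_j} ≤ λ(n_j) for all j ≤ k automatically satisfies |g_{k−1}|_{n_k} ≤ λ(n_k) for all k ≥ 2. -/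
/-- If the gauge function grows rapidly (`λ(n+1) ≥ n + 2(λ(1) + ⋯ + λ(n))`), then along
a sequence `g_k = g₀σ₁h₁⋯σ_kh_k` with strictly increasing heights `n_k`, the bounds
`|g₀|_{n₁} ≤ λ(n₁)` and `|h_j|_{n_j} ≤ λ(n_j)` automatically imply
`|g_{k-1}|_{n_k} ≤ λ(n_k)` for all `k ≥ 2`. -/
theorem length_bound_automatic {G : Type*} [Group G]
    (L : ℕ → G → ℕ)
    (hsub : ∀ (n : ℕ) (g h : G), L n (g * h) ≤ L n g + L n h)
    (hmono : ∀ m n : ℕ, m ≤ n → ∀ g : G, L n g ≤ L m g)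
    (lam : ℕ → ℕ) (hlam : Monotone lam)
    (hgrow : ∀ m, 1 ≤ m → m + 2 * (∑ i ∈ Finset.Icc 1 m, lam i) ≤ lam (m + 1))
    (σ h : ℕ → G) (n : ℕ → ℕ) (g : ℕ → G)
    (hn : ∀ k, 1 ≤ k → n k < n (k + 1)) (hn1 : 1 ≤ n 1)
    (hσ : ∀ k, 1 ≤ k → ∀ m, n k < m → L m (σ k) ≤ 1)
    (hrec : ∀ k, 1 ≤ k → g k = g (k - 1) * σ k * h k)
    (hg0 : L (n 1) (g 0) ≤ lam (n 1))
    (hh : ∀ k, 1 ≤ k → L (n k) (h k) ≤ lam (n k)) :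
    ∀ k, 2 ≤ k → L (n k) (g (k - 1)) ≤ lam (n k) := by
  -- key consequence of the growth condition
  have hkey : ∀ m, 1 ≤ m → 2 * lam m + 1 ≤ lam (m + 1) := by
    intro m hm
    have h1 : lam m ≤ ∑ i ∈ Finset.Icc 1 m, lam i := by
      apply Finset.single_le_sum (f := lam) (fun i _ => Nat.zero_le _)
      simp [Finset.mem_Icc, hm]
    have := hgrow m hm
    omega
  -- n k ≥ 1 for k ≥ 1
  have hnpos : ∀ k, 1 ≤ k → 1 ≤ n k := by
    intro k hk
    induction k with
    | zero => omega
    | succ j ih =>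
      rcases Nat.eq_or_lt_of_le hk with h' | h'
      · obtain rfl : j = 0 := by omega
        exact hn1
      · have hj : 1 ≤ j := by omega
        have := hn j hj
        have := ih hj
        omega
  intro k hk
  induction k, hk using Nat.le_induction with
  | base =>
    have hrec1 := hrec 1 le_rfl
    simp only [show (2:ℕ) - 1 = 1 from rfl] at *
    rw [hrec1]
    have hle : n 1 ≤ n 2 := (hn 1 le_rfl).le
    calc L (n 2) (g 0 * σ 1 * h 1)
        ≤ L (n 2) (g 0 * σ 1) + L (n 2) (h 1) := hsub _ _ _
      _ ≤ (L (n 2) (g 0) + L (n 2) (σ 1)) + L (n 2) (h 1) :=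
          Nat.add_le_add_right (hsub _ _ _) _
      _ ≤ (lam (n 1) + 1) + lam (n 1) := by
          gcongr
          · exact le_trans (hmono _ _ hle _) hg0
          · exact hσ 1 le_rfl _ (hn 1 le_rfl)
          · exact le_trans (hmono _ _ hle _) (hh 1 le_rfl)
      _ = 2 * lam (n 1) + 1 := by ring
      _ ≤ lam (n 1 + 1) := hkey _ hn1
      _ ≤ lam (n 2) := hlam (hn 1 le_rfl)
  | succ k hk2 ih =>
    have hk1 : 1 ≤ k := by omega
    have ih' := ih
    have hreck := hrec k hk1
    have hle : n k ≤ n (k + 1) := (hn k hk1).le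
    have hgk : (k + 1 - 1) = k := by omega
    rw [hgk, hreck]
    calc L (n (k+1)) (g (k-1) * σ k * h k)
        ≤ L (n (k+1)) (g (k-1) * σ k) + L (n (k+1)) (h k) := hsub _ _ _
      _ ≤ (L (n (k+1)) (g (k-1)) + L (n (k+1)) (σ k)) + L (n (k+1)) (h k) :=
          Nat.add_le_add_right (hsub _ _ _) _
      _ ≤ (lam (n k) + 1) + lam (n k) := by
          gcongr
          · exact le_trans (hmono _ _ hle _) ih'
          · exact hσ k hk1 _ (hn k hk1)
          · exact le_trans (hmono _ _ hle _) (hh k hk1)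
      _ = 2 * lam (n k) + 1 := by ring
      _ ≤ lam (n k + 1) := hkey _ (hnpos k hk1)
      _ ≤ lam (n (k+1)) := hlam (hn k hk1)
end

section
/- Let p = (p₀, p₁, ...) be a probability measure on ℤ₊ with infinite support, set ρⱼ = pⱼ/(pⱼ + p_{j+1} + ...), and let X₁, X₂, ... be i.i.d. with law p. If Σⱼ ρⱼ² < ∞, then almost surely the records of the sequence are eventually simple: there exists N such that for all n ≥ N the maximum Mₙ = max{X₁, ..., Xₙ} is attained at exactly one index i ≤ n. -/
open MeasureTheory ProbabilityTheory Filter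
open scoped ENNReal

section Aux

variable {Ω : Type*} [MeasurableSpace Ω]

/-- The event that `j` is hit (as value) at times `m` and `n`, with all other
values before time `n` strictly below `j`. -/
def recD (X : ℕ → Ω → ℕ) (j m n : ℕ) : Set Ω :=
  ⋂ i ∈ Finset.range (n + 1),
    X i ⁻¹' (if i = m then {j} else if i = n then {j} else Set.Iio j)

omit [MeasurableSpace Ω] in
lemma mem_recD {X : ℕ → Ω → ℕ} {j m n : ℕ} {ω : Ω} (hmn : m < n)
    (h1 : X m ω = j) (h2 : X n ω = j) (h3 : ∀ i < n, i ≠ m → X i ω < j) :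
    ω ∈ recD X j m n := by
  simp only [recD, Set.mem_iInter, Set.mem_preimage, Finset.mem_range]
  intro i hi
  rcases eq_or_ne i m with rfl | him
  · simp [h1]
  · rcases eq_or_ne i n with rfl | hin
    · simp [him, h2]
    · have hlt : i < n := by omega
      simp [him, hin, h3 i hlt him]

lemma measure_recD (μ : Measure Ω) (p : Measure ℕ)
    {X : ℕ → Ω → ℕ} (hmeas : ∀ i, Measurable (X i))
    (hindep : iIndepFun X μ)
    (hdist : ∀ i, μ.map (X i) = p) {j m n : ℕ} (hmn : m < n) :
    μ (recD X j m n) = p {j} ^ 2 * p (Set.Iio j) ^ (n - 1) := by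
  classical
  set A : ℕ → Set ℕ := fun i =>
    if i = m then {j} else if i = n then {j} else Set.Iio j with hA
  have key : μ (⋂ i ∈ Finset.range (n + 1), X i ⁻¹' A i)
      = ∏ i ∈ Finset.range (n + 1), p (A i) := by
    rw [hindep.meas_biInter (fun i _ => ⟨A i, trivial, rfl⟩)]
    refine Finset.prod_congr rfl fun i _ => ?_
    rw [← hdist i, Measure.map_apply (hmeas i) trivial]
  rw [recD, key]
  have hm : m ∈ Finset.range (n + 1) := Finset.mem_range.2 (by omega)
  have hn : n ∈ (Finset.range (n + 1)).erase m :=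
    Finset.mem_erase.2 ⟨hmn.ne', Finset.mem_range.2 (by omega)⟩
  rw [← Finset.mul_prod_erase _ _ hm, ← Finset.mul_prod_erase _ _ hn]
  have hAm : A m = {j} := by simp [hA]
  have hAn : A n = {j} := by simp [hA, hmn.ne']
  have hrest : ∏ i ∈ ((Finset.range (n + 1)).erase m).erase n, p (A i)
      = p (Set.Iio j) ^ (n - 1) := by
    rw [Finset.prod_congr rfl (fun i hi => ?_), Finset.prod_const]
    · congr 1
      rw [Finset.card_erase_of_mem hn, Finset.card_erase_of_mem hm, Finset.card_range]
      omega
    · simp only [Finset.mem_erase] at hi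
      simp [hA, hi.1, hi.2.1]
  rw [hAm, hAn, hrest]
  ring

end Aux

/-- **Eventual record simplicity** (Brands–Steutel–Wilms): if `Σⱼ ρⱼ² < ∞` where
`ρⱼ = pⱼ / (pⱼ + p_{j+1} + ⋯)`, then almost surely the running maximum of an i.i.d.
`p`-distributed sequence is eventually attained at exactly one index. -/
theorem eventual_record_simplicity
    {Ω : Type*} [MeasurableSpace Ω] (μ : Measure Ω) [IsProbabilityMeasure μ]
    (p : Measure ℕ) [IsProbabilityMeasure p]
    (X : ℕ → Ω → ℕ) (hmeas : ∀ i, Measurable (X i))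
    (hindep : iIndepFun X μ)
    (hdist : ∀ i, μ.map (X i) = p)
    (hsupp : {j : ℕ | p {j} ≠ 0}.Infinite)
    (hsum : ∑' j : ℕ, (p {j} / p (Set.Ici j)) ^ 2 ≠ ⊤) :
    ∀ᵐ ω ∂μ, ∃ N, ∀ n ≥ N, ∃! i, i ∈ Finset.range n ∧
      X i ω = (Finset.range n).sup fun j => X j ω := by
  classical
  set B : ℕ → Set Ω := fun j => ⋃ q : ℕ × ℕ, recD X j q.1 (q.1 + q.2 + 1) with hB
  -- product formula for independent coordinates
  have hprod : ∀ (S : Finset ℕ) (A : ℕ → Set ℕ),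
      μ (⋂ i ∈ S, X i ⁻¹' A i) = ∏ i ∈ S, p (A i) := by
    intro S A
    rw [hindep.meas_biInter (fun i _ => ⟨A i, trivial, rfl⟩)]
    exact Finset.prod_congr rfl fun i _ => by
      rw [← hdist i, Measure.map_apply (hmeas i) trivial]
  -- the complement of Iio j is Ici j
  have hcompl : ∀ j : ℕ, (1 : ℝ≥0∞) - p (Set.Iio j) = p (Set.Ici j) := by
    intro j
    have h := measure_compl (s := Set.Iio j) measurableSet_Iio (measure_ne_top p _)
    rw [Set.compl_Iio, measure_univ] at h
    exact h.symm
  -- measure bound for B j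
  have hBj : ∀ j, μ (B j) ≤ (p {j} / p (Set.Ici j)) ^ 2 := by
    intro j
    set t : ℝ≥0∞ := p (Set.Iio j) with ht
    calc μ (B j) ≤ ∑' q : ℕ × ℕ, μ (recD X j q.1 (q.1 + q.2 + 1)) :=
          measure_iUnion_le _
      _ = ∑' q : ℕ × ℕ, p {j} ^ 2 * t ^ (q.1 + q.2) := by
          refine tsum_congr fun q => ?_
          rw [measure_recD μ p hmeas hindep hdist (by omega)]
          norm_num [ht]
      _ = p {j} ^ 2 * ((∑' k : ℕ, t ^ k) * (∑' k : ℕ, t ^ k)) := by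
          rw [ENNReal.tsum_mul_left]
          congr 1
          rw [ENNReal.tsum_prod (f := fun m k => t ^ (m + k))]
          simp_rw [pow_add, ENNReal.tsum_mul_left]
          rw [ENNReal.tsum_mul_right]
      _ = (p {j} / p (Set.Ici j)) ^ 2 := by
          rw [ENNReal.tsum_geometric, hcompl j, div_eq_mul_inv, mul_pow]
          ring
  have htsum : ∑' j, μ (B j) ≠ ⊤ :=
    ne_top_of_le_ne_top hsum (ENNReal.tsum_le_tsum hBj)
  -- a.s. unboundedness
  have hub : ∀ᵐ ω ∂μ, ∀ K : ℕ, ∃ i, K < X i ω := by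
    rw [ae_all_iff]
    intro K
    have hq : p (Set.Iic K) < 1 := by
      obtain ⟨j, hj, hjK⟩ := hsupp.exists_gt K
      have hpos : 0 < p (Set.Ioi K) :=
        lt_of_lt_of_le (pos_iff_ne_zero.2 hj)
          (measure_mono (Set.singleton_subset_iff.2 hjK))
      have hadd : p (Set.Iic K) + p (Set.Ioi K) = 1 := by
        have h := measure_add_measure_compl (μ := p) (s := Set.Iic K) measurableSet_Iic
        rwa [Set.compl_Iic, measure_univ] at h
      calc p (Set.Iic K) < p (Set.Iic K) + p (Set.Ioi K) :=
            ENNReal.lt_add_right (measure_ne_top p _) hpos.ne'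
        _ = 1 := hadd
    have hEn : ∀ n : ℕ, μ {ω | ∀ i, X i ω ≤ K} ≤ p (Set.Iic K) ^ n := by
      intro n
      have hsub : {ω | ∀ i, X i ω ≤ K} ⊆ ⋂ i ∈ Finset.range n, X i ⁻¹' Set.Iic K := by
        intro ω hω
        simp only [Set.mem_iInter, Set.mem_preimage, Set.mem_Iic]
        exact fun i _ => hω i
      calc μ {ω | ∀ i, X i ω ≤ K} ≤ μ (⋂ i ∈ Finset.range n, X i ⁻¹' Set.Iic K) :=
            measure_mono hsub
        _ = ∏ i ∈ Finset.range n, p (Set.Iic K) := hprod _ _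
        _ = p (Set.Iic K) ^ n := by rw [Finset.prod_const, Finset.card_range]
    have h0 : μ {ω | ∀ i, X i ω ≤ K} = 0 := by
      refine le_antisymm ?_ zero_le
      exact ge_of_tendsto' (ENNReal.tendsto_pow_atTop_nhds_zero_of_lt_one hq) hEn
        |>.trans_eq rfl
    rw [ae_iff]
    convert h0 using 2
    ext ω
    simp [not_exists, not_lt]
  -- Borel-Cantelli
  have hBC : ∀ᵐ ω ∂μ, ∀ᶠ j in atTop, ω ∉ B j := ae_eventually_notMem htsum
  filter_upwards [hBC, hub] with ω hω1 hω2
  obtain ⟨J, hJ⟩ := eventually_atTop.1 hω1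
  obtain ⟨i₀, hi₀⟩ := hω2 J
  refine ⟨i₀ + 1, fun n hn => ?_⟩
  set v := (Finset.range n).sup fun j => X j ω with hv
  have hi₀mem : i₀ ∈ Finset.range n := Finset.mem_range.2 (by omega)
  have hvJ : J < v := lt_of_lt_of_le hi₀ (Finset.le_sup (f := fun j => X j ω) hi₀mem)
  obtain ⟨istar, histar, hsup⟩ :=
    Finset.exists_mem_eq_sup (Finset.range n) ⟨0, Finset.mem_range.2 (by omega)⟩
      (fun j => X j ω)
  refine ⟨istar, ⟨histar, hsup.symm⟩, fun y hy => ?_⟩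
  by_contra hne
  -- two distinct maximizers : y and istar
  obtain ⟨hymem, hyeq⟩ := hy
  set a := min y istar with ha
  set b := max y istar with hb'
  have hab : a < b := by
    rcases lt_or_gt_of_ne hne with h | h
    · simp [ha, hb', h.le, h]
    · simp only [ha, hb']
      omega
  have hXa : X a ω = v := by
    rcases min_choice y istar with h | h
    · rw [ha, h, hyeq]
    · rw [ha, h, ← hsup]
  have hXb : X b ω = v := by
    rcases max_choice y istar with h | h
    · rw [hb', h, hyeq]
    · rw [hb', h, ← hsup]
  have hbn : b < n := by
    have h1 := Finset.mem_range.1 hymem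
    have h2 := Finset.mem_range.1 histar
    simp only [hb']
    omega
  have hex1 : ∃ l, X l ω = v := ⟨a, hXa⟩
  set m := Nat.find hex1 with hm
  have hXm : X m ω = v := Nat.find_spec hex1
  have hma : m ≤ a := Nat.find_min' hex1 hXa
  have hex2 : ∃ l, m < l ∧ X l ω = v := ⟨b, lt_of_le_of_lt hma hab, hXb⟩
  set n' := Nat.find hex2 with hn'
  obtain ⟨hmn', hXn'⟩ := Nat.find_spec hex2
  have hn'b : n' ≤ b := Nat.find_min' hex2 ⟨lt_of_le_of_lt hma hab, hXb⟩
  have hmemD : ω ∈ recD X v m n' := by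
    refine mem_recD hmn' hXm hXn' fun i hi him => ?_
    have hle : X i ω ≤ v := Finset.le_sup (f := fun j => X j ω) (Finset.mem_range.2 (by omega))
    refine lt_of_le_of_ne hle ?_
    rcases lt_or_gt_of_ne him with h | h
    · exact Nat.find_min hex1 h
    · intro hcon
      exact Nat.find_min hex2 hi ⟨h, hcon⟩
  have hωB : ω ∈ B v := by
    refine Set.mem_iUnion.2 ⟨(m, n' - m - 1), ?_⟩
    have : m + (n' - m - 1) + 1 = n' := by omega
    rwa [this]
  exact hJ v hvJ.le hωB
end

section
/- Let (Xₙ, εₙ) be i.i.d. random variables with values in ℤ₊ × {0,1} and joint law p̃, let p be the marginal of p̃ on ℤ₊, and suppose (a) Σⱼ (pⱼ/(pⱼ + p_{j+1} + ...))² < ∞ and (b) Σⱼ αⱼ < ∞, where αⱼ = p̃_{j,1}/pⱼ. Then almost surely ε_{T_k} = 0 for all sufficiently large k, where T_k are the weak record times of (Xₙ). -/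
open MeasureTheory ProbabilityTheory Filter

noncomputable def recT {Ω : Type*} (X : ℕ → Ω → ℕ) : ℕ → Ω → ℕ
  | 0, _ => 1
  | k + 1, ω => sInf {n : ℕ | recT X k ω < n ∧ X (recT X k ω) ω ≤ X n ω}

section Det

variable {Ω : Type*} {X : ℕ → Ω → ℕ} {ω : Ω}
  (hg : ∀ j N : ℕ, ∃ n, N < n ∧ j < X n ω)

include hg

lemma recT_succ_mem (k : ℕ) :
    recT X k ω < recT X (k+1) ω ∧ X (recT X k ω) ω ≤ X (recT X (k+1) ω) ω := by
  have hne : {n : ℕ | recT X k ω < n ∧ X (recT X k ω) ω ≤ X n ω}.Nonempty := by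
    obtain ⟨n, hn, hx⟩ := hg (X (recT X k ω) ω) (recT X k ω)
    exact ⟨n, hn, hx.le⟩
  exact Nat.sInf_mem hne

lemma recT_one_le (k : ℕ) : 1 ≤ recT X k ω := by
  induction k with
  | zero => simp [recT]
  | succ k ih => exact ih.trans (recT_succ_mem hg k).1.le

lemma recT_val_mono : Monotone fun k => X (recT X k ω) ω :=
  monotone_nat_of_le_succ fun k => (recT_succ_mem hg k).2

lemma recT_ge (k : ℕ) : k + 1 ≤ recT X k ω := by
  induction k with
  | zero => simp [recT]
  | succ k ih => exact Nat.succ_le_of_lt (lt_of_le_of_lt ih (recT_succ_mem hg k).1)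

lemma recT_dom (k : ℕ) : ∀ m, 1 ≤ m → m < recT X k ω → X m ω ≤ X (recT X k ω) ω := by
  induction k with
  | zero => intro m h1 h2; simp [recT] at h2; omega
  | succ k ih =>
    intro m h1 h2
    rcases lt_trichotomy m (recT X k ω) with h | h | h
    · exact (ih m h1 h).trans (recT_succ_mem hg k).2
    · rw [h]; exact (recT_succ_mem hg k).2
    · have hnot : m ∉ {n : ℕ | recT X k ω < n ∧ X (recT X k ω) ω ≤ X n ω} :=
        Nat.notMem_of_lt_sInf h2
      simp only [Set.mem_setOf_eq, not_and, not_le] at hnot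
      exact ((hnot h).le).trans (recT_succ_mem hg k).2

lemma recT_val_unbounded (j : ℕ) : ∃ K, ∀ k ≥ K, j < X (recT X k ω) ω := by
  obtain ⟨n, hn1, hnj⟩ := hg j 0
  refine ⟨n, fun k hk => ?_⟩
  have hlt : n < recT X n ω := lt_of_lt_of_le (Nat.lt_succ_self n) (recT_ge hg n)
  calc j < X n ω := hnj
    _ ≤ X (recT X n ω) ω := recT_dom hg n n hn1 hlt
    _ ≤ X (recT X k ω) ω := recT_val_mono hg hk

end Det

section Prob

variable {Ω : Type*} [MeasurableSpace Ω] {μ : Measure Ω} [IsProbabilityMeasure μ]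
  {pt : Measure (ℕ × Bool)}
  {X : ℕ → Ω → ℕ} {ε : ℕ → Ω → Bool}

/-- independence product formula specialised to preimages. -/
lemma meas_biInter_pre
    (hindep : iIndepFun (fun i ω => (X i ω, ε i ω)) μ)
    (hdist : ∀ i, μ.map (fun ω => (X i ω, ε i ω)) = pt)
    (hmeas : ∀ i, Measurable fun ω => (X i ω, ε i ω))
    (S : Finset ℕ) (D : ℕ → Set (ℕ × Bool)) :
    μ (⋂ i ∈ S, (fun ω => (X i ω, ε i ω)) ⁻¹' D i) = ∏ i ∈ S, pt (D i) := by
  rw [hindep.meas_biInter (fun i _ => ⟨D i, .of_discrete, rfl⟩)]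
  refine Finset.prod_congr rfl fun i _ => ?_
  rw [← hdist i, Measure.map_apply (hmeas i) .of_discrete]

end Prob


/-- target set of the pair at index `i` in the record-with-flag event. -/
def Dset (j n i : ℕ) : Set (ℕ × Bool) :=
  if i = n + 1 then {(j, true)} else Prod.fst ⁻¹' Set.Iic j

/-- the event that `n+1` is a "prefix-record" time with value `j` and flag `true`. -/
def Bset {Ω : Type*} (X : ℕ → Ω → ℕ) (ε : ℕ → Ω → Bool) (j n : ℕ) : Set Ω :=
  ⋂ i ∈ Finset.Icc 1 (n + 1), (fun ω => (X i ω, ε i ω)) ⁻¹' (Dset j n i)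

lemma Bset_mem_iff {Ω : Type*} {X : ℕ → Ω → ℕ} {ε : ℕ → Ω → Bool} {j n : ℕ} {ω : Ω} :
    ω ∈ Bset X ε j n ↔
      (∀ m, 1 ≤ m → m ≤ n → X m ω ≤ j) ∧ X (n + 1) ω = j ∧ ε (n + 1) ω = true := by
  simp only [Bset, Set.mem_iInter, Set.mem_preimage, Finset.mem_Icc, Dset]
  constructor
  · intro h
    have hend := h (n + 1) ⟨by omega, le_rfl⟩
    rw [if_pos rfl] at hend
    simp only [Set.mem_singleton_iff, Prod.mk.injEq] at hend
    refine ⟨fun m h1 h2 => ?_, hend.1, hend.2⟩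
    have := h m ⟨h1, by omega⟩
    rw [if_neg (by omega)] at this
    simpa using this
  · rintro ⟨h1, h2, h3⟩ i ⟨hi1, hi2⟩
    by_cases hi : i = n + 1
    · subst hi
      rw [if_pos rfl]
      simp [h2, h3]
    · rw [if_neg hi]
      simpa using h1 i hi1 (by omega)

section Prob2

variable {Ω : Type*} [MeasurableSpace Ω] {μ : Measure Ω} [IsProbabilityMeasure μ]
  {pt : Measure (ℕ × Bool)}
  {X : ℕ → Ω → ℕ} {ε : ℕ → Ω → Bool}

lemma Bset_meas
    (hindep : iIndepFun (fun i ω => (X i ω, ε i ω)) μ)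
    (hdist : ∀ i, μ.map (fun ω => (X i ω, ε i ω)) = pt)
    (hmeas : ∀ i, Measurable fun ω => (X i ω, ε i ω)) (j n : ℕ) :
    μ (Bset X ε j n) = (pt (Prod.fst ⁻¹' Set.Iic j)) ^ n * pt {(j, true)} := by
  rw [Bset, meas_biInter_pre hindep hdist hmeas]
  rw [show Finset.Icc 1 (n + 1) = insert (n + 1) (Finset.Icc 1 n) from by
    ext x; simp [Finset.mem_Icc, Finset.mem_insert]; omega]
  rw [Finset.prod_insert (by simp)]
  have hcongr : ∀ i ∈ Finset.Icc 1 n, pt (Dset j n i) = pt (Prod.fst ⁻¹' Set.Iic j) := by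
    intro i hi
    rw [Finset.mem_Icc] at hi
    rw [Dset, if_neg (by omega)]
  rw [Finset.prod_congr rfl hcongr, Finset.prod_const, Nat.card_Icc]
  rw [Dset, if_pos rfl]
  simp [mul_comm]

end Prob2

/-- If the marginal `p` of the i.i.d. pairs `(Xₙ, εₙ)` satisfies the eventual record
simplicity condition and `Σⱼ αⱼ < ∞` with `αⱼ = p̃_{j,1}/pⱼ`, then almost surely
`ε_{T_k} = 0` (i.e. `false`) for all sufficiently large `k`. -/
theorem records_eventually_in_subpopulation
    {Ω : Type*} [MeasurableSpace Ω] (μ : Measure Ω) [IsProbabilityMeasure μ]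
    (pt : Measure (ℕ × Bool)) [IsProbabilityMeasure pt]
    (X : ℕ → Ω → ℕ) (ε : ℕ → Ω → Bool)
    (hmeas : ∀ i, Measurable fun ω => (X i ω, ε i ω))
    (hindep : iIndepFun (fun i ω => (X i ω, ε i ω)) μ)
    (hdist : ∀ i, μ.map (fun ω => (X i ω, ε i ω)) = pt)
    (hsupp : {j : ℕ | (pt.map Prod.fst) {j} ≠ 0}.Infinite)
    (hsumA : ∑' j : ℕ,
      ((pt.map Prod.fst) {j} / (pt.map Prod.fst) (Set.Ici j)) ^ 2 ≠ ⊤)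
    (hsumB : ∑' j : ℕ, pt {(j, true)} / (pt.map Prod.fst) {j} ≠ ⊤) :
    ∀ᵐ ω ∂μ, ∃ K, ∀ k ≥ K, ε (recT X k ω) ω = false := by
  set ν := pt.map Prod.fst with hν
  set p : ℕ → ENNReal := fun j => ν {j} with hp
  set t : ℕ → ENNReal := fun j => ν (Set.Ici j) with ht
  set s : ℕ → ENNReal := fun j => ν (Set.Iic j) with hs
  set q : ℕ → ENNReal := fun j => pt {(j, true)} with hq
  have hνprob : IsProbabilityMeasure ν := Measure.isProbabilityMeasure_map measurable_fst.aemeasurable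
  have hνapp : ∀ D : Set ℕ, ν D = pt (Prod.fst ⁻¹' D) := fun D =>
    Measure.map_apply measurable_fst .of_discrete
  -- positivity of tails
  have htpos : ∀ j, t j ≠ 0 := by
    intro j
    obtain ⟨j', hj', hjj'⟩ := hsupp.exists_gt j
    have : p j' ≤ t j := measure_mono (by intro x hx; simp_all; omega)
    intro h0
    exact hj' (le_antisymm (h0 ▸ this) (zero_le))
  have htne : ∀ j, t j ≠ ⊤ := fun j => (measure_lt_top ν _).ne
  have hsne : ∀ j, s j ≠ ⊤ := fun j => (measure_lt_top ν _).ne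
  have hpne : ∀ j, p j ≠ ⊤ := fun j => (measure_lt_top ν _).ne
  -- splitting identities
  have hst : ∀ j, s j + t (j+1) = 1 := by
    intro j
    show ν (Set.Iic j) + ν (Set.Ici (j+1)) = 1
    rw [← measure_union (Set.disjoint_left.mpr (by intro u hu1 hu2; simp_all <;> omega)) .of_discrete]
    rw [show Set.Iic j ∪ Set.Ici (j+1) = Set.univ from by ext x; simp; omega]
    exact measure_univ
  have hts : ∀ j, t j = p j + t (j+1) := by
    intro j
    have hset : ({j} : Set ℕ) ∪ Set.Ici (j+1) = Set.Ici j := by ext x; simp; omega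
    show ν (Set.Ici j) = ν {j} + ν (Set.Ici (j+1))
    rw [← hset, measure_union (Set.disjoint_left.mpr (by intro u hu1 hu2; simp_all <;> omega)) .of_discrete]
  have hs_lt_one : ∀ j, s j < 1 := by
    intro j
    rcases lt_or_eq_of_le (show s j ≤ 1 from prob_le_one) with h | h
    · exact h
    · exfalso
      apply htpos (j+1)
      have := hst j
      rw [h] at this
      nth_rewrite 2 [show (1:ENNReal) = 1 + 0 from (add_zero 1).symm] at this
      exact ((ENNReal.add_right_inj ENNReal.one_ne_top).mp this)
  have hone_sub_s : ∀ j, 1 - s j = t (j+1) := fun j =>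
    ENNReal.sub_eq_of_eq_add (hsne j) (by rw [add_comm, hst j])
  -- almost surely the sequence exceeds every level infinitely often
  have hE1 : ∀ᵐ ω ∂μ, ∀ j N : ℕ, ∃ n, N < n ∧ j < X n ω := by
    rw [ae_all_iff]
    intro j
    rw [ae_all_iff]
    intro N
    rw [ae_iff]
    have hbound : ∀ M : ℕ, μ {ω | ¬∃ n, N < n ∧ j < X n ω} ≤ s j ^ M := by
      intro M
      have hsub : {ω | ¬∃ n, N < n ∧ j < X n ω} ⊆
          ⋂ i ∈ Finset.Icc (N + 1) (N + M),
            (fun ω => (X i ω, ε i ω)) ⁻¹' (Prod.fst ⁻¹' Set.Iic j) := by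
        intro ω hω
        simp only [Set.mem_setOf_eq, not_exists, not_and, not_lt] at hω
        simp only [Set.mem_iInter, Set.mem_preimage, Finset.mem_Icc]
        intro i hi
        exact hω i (by omega)
      calc μ {ω | ¬∃ n, N < n ∧ j < X n ω}
          ≤ μ (⋂ i ∈ Finset.Icc (N + 1) (N + M),
              (fun ω => (X i ω, ε i ω)) ⁻¹' (Prod.fst ⁻¹' Set.Iic j)) := measure_mono hsub
        _ = ∏ _i ∈ Finset.Icc (N + 1) (N + M), pt (Prod.fst ⁻¹' Set.Iic j) :=
            meas_biInter_pre hindep hdist hmeas _ _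
        _ = pt (Prod.fst ⁻¹' Set.Iic j) ^ M := by
            rw [Finset.prod_const, Nat.card_Icc]; congr 1; omega
        _ = s j ^ M := by rw [← hνapp]
    have htendpow : Tendsto (fun M : ℕ => s j ^ M) atTop (nhds 0) :=
      ENNReal.tendsto_pow_atTop_nhds_zero_of_lt_one (hs_lt_one j)
    have : μ {ω | ¬∃ n, N < n ∧ j < X n ω} ≤ 0 :=
      le_of_tendsto_of_tendsto' tendsto_const_nhds htendpow hbound
    exact le_antisymm this (zero_le)
  -- measure of the union over n of the Bset events
  have hA_le : ∀ j, μ (⋃ n, Bset X ε j n) ≤ q j / t (j + 1) := by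
    intro j
    calc μ (⋃ n, Bset X ε j n) ≤ ∑' n, μ (Bset X ε j n) := measure_iUnion_le _
      _ = ∑' n : ℕ, s j ^ n * q j := by
          refine tsum_congr fun n => ?_
          rw [Bset_meas hindep hdist hmeas, ← hνapp]
      _ = (1 - s j)⁻¹ * q j := by rw [ENNReal.tsum_mul_right, ENNReal.tsum_geometric]
      _ = q j / t (j + 1) := by rw [hone_sub_s, div_eq_mul_inv, mul_comm]
  -- summability of the bounds
  have hq_le_p : ∀ j, q j ≤ p j := by
    intro j
    rw [show p j = pt (Prod.fst ⁻¹' {j}) from hνapp _]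
    exact measure_mono (by
      intro x hx
      simp only [Set.mem_singleton_iff] at hx
      subst hx
      simp)
  have htend : Tendsto (fun j => (p j / t j) ^ 2) atTop (nhds 0) :=
    ENNReal.tendsto_atTop_zero_of_tsum_ne_top hsumA
  obtain ⟨J, hJ⟩ := ENNReal.tendsto_atTop_zero.mp htend ((1 / 2) ^ 2)
    (by apply ENNReal.pow_pos; norm_num)
  have hhalf : ∀ j ≥ J, p j / t j ≤ 1 / 2 := by
    intro j hj
    by_contra h
    push_neg at h
    exact absurd (hJ j hj) (not_le.mpr (ENNReal.pow_lt_pow_left (by norm_num) h))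
  have hp_le_t1 : ∀ j ≥ J, p j ≤ t (j + 1) := by
    intro j hj
    have h1 : p j ≤ 1 / 2 * t j := by
      calc p j = p j / t j * t j := (ENNReal.div_mul_cancel (htpos j) (htne j)).symm
        _ ≤ 1 / 2 * t j := mul_le_mul_left (hhalf j hj) _
    have h2 : p j + p j ≤ p j + t (j + 1) := by
      calc p j + p j = 2 * p j := (two_mul _).symm
        _ ≤ 2 * (1 / 2 * t j) := mul_le_mul_right h1 2
        _ = t j := by
            rw [← mul_assoc, show (2 : ENNReal) * (1 / 2) = 1 from by
              rw [one_div]; exact ENNReal.mul_inv_cancel two_ne_zero ENNReal.ofNat_ne_top, one_mul]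
        _ = p j + t (j + 1) := hts j
    exact (ENNReal.add_le_add_iff_left (hpne j)).mp h2
  have hsum_total : ∑' j, μ (⋃ n, Bset X ε j n) ≠ ⊤ := by
    have hle : ∀ j, μ (⋃ n, Bset X ε j n) ≤
        q j / p j + (if j < J then q j / t (j + 1) else 0) := by
      intro j
      rcases lt_or_ge j J with h | h
      · rw [if_pos h]
        exact (hA_le j).trans (le_add_left le_rfl)
      · rw [if_neg (not_lt.mpr h), add_zero]
        exact (hA_le j).trans (ENNReal.div_le_div le_rfl (hp_le_t1 j h))
    refine ne_top_of_le_ne_top ?_ (ENNReal.tsum_le_tsum hle)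
    rw [ENNReal.tsum_add]
    refine ENNReal.add_ne_top.mpr ⟨hsumB, ?_⟩
    rw [tsum_eq_sum (s := Finset.range J)
      (by intro j hj; rw [if_neg]; simpa using hj)]
    refine (ENNReal.sum_lt_top.mpr fun j _ => ?_).ne
    by_cases hj : j < J
    · rw [if_pos hj]
      exact ENNReal.div_lt_top (measure_ne_top pt _) (htpos (j + 1))
    · rw [if_neg hj]
      exact ENNReal.zero_lt_top
  have hBC : ∀ᵐ ω ∂μ, ∀ᶠ j in atTop, ω ∉ ⋃ n, Bset X ε j n :=
    ae_eventually_notMem hsum_total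
  -- combine
  filter_upwards [hE1, hBC] with ω hg hbc
  obtain ⟨J', hJ'⟩ := eventually_atTop.mp hbc
  obtain ⟨K, hK⟩ := recT_val_unbounded hg J'
  refine ⟨K, fun k hk => ?_⟩
  by_contra hfalse
  have htrue : ε (recT X k ω) ω = true := by
    cases h : ε (recT X k ω) ω
    · exact absurd h hfalse
    · rfl
  have h1 : 1 ≤ recT X k ω := recT_one_le hg k
  have hmem : ω ∈ ⋃ n, Bset X ε (X (recT X k ω) ω) n := by
    refine Set.mem_iUnion.mpr ⟨recT X k ω - 1, ?_⟩
    rw [Bset_mem_iff]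
    have hsucc : recT X k ω - 1 + 1 = recT X k ω := by omega
    refine ⟨fun m hm1 hm2 => recT_dom hg k m hm1 (by omega), by rw [hsucc], by rw [hsucc]; exact htrue⟩
  exact hJ' (X (recT X k ω) ω) (hK k hk).le hmem
end

section
/- Let (Xₙ) be i.i.d. ℤ₊-valued random variables with c.d.f. F, and let φ: ℕ → ℕ be non-decreasing with Σₙ F_{φ(n)}ⁿ < ∞. Then almost surely Mₙ = max{X₁, ..., Xₙ} ≥ φ(n) for all sufficiently large n. -/
open MeasureTheory ProbabilityTheory

/-- Lower bound on record values: if `φ` is non-decreasing and `Σₙ F_{φ(n)}ⁿ < ∞`,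
then almost surely `Mₙ ≥ φ(n)` for all sufficiently large `n`, where `Mₙ` is the
running maximum of an i.i.d. `p`-distributed sequence. -/
theorem record_values_lower_bound
    {Ω : Type*} [MeasurableSpace Ω] (μ : Measure Ω) [IsProbabilityMeasure μ]
    (p : Measure ℕ) [IsProbabilityMeasure p]
    (X : ℕ → Ω → ℕ) (hmeas : ∀ i, Measurable (X i))
    (hindep : iIndepFun X μ)
    (hdist : ∀ i, μ.map (X i) = p)
    (φ : ℕ → ℕ) (hφ : Monotone φ)
    (hsum : ∑' n : ℕ, p (Set.Iic (φ n)) ^ n ≠ ⊤) :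
    ∀ᵐ ω ∂μ, ∃ N, ∀ n ≥ N, φ n ≤ (Finset.range n).sup fun i => X i ω := by
  set A : ℕ → Set Ω := fun n => ⋂ i ∈ Finset.range n, (X i) ⁻¹' (Set.Iio (φ n)) with hA
  have hbound : ∀ n, μ (A n) ≤ p (Set.Iic (φ n)) ^ n := by
    intro n
    have h1 : μ (A n) = ∏ i ∈ Finset.range n, μ ((X i) ⁻¹' (Set.Iio (φ n))) :=
      hindep.meas_biInter fun i _ => ⟨Set.Iio (φ n), measurableSet_Iio, rfl⟩
    rw [h1]
    calc ∏ i ∈ Finset.range n, μ ((X i) ⁻¹' (Set.Iio (φ n)))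
        ≤ ∏ i ∈ Finset.range n, p (Set.Iic (φ n)) := by
          apply Finset.prod_le_prod' 
          intro i _
          have : μ ((X i) ⁻¹' (Set.Iio (φ n))) = p (Set.Iio (φ n)) := by
            rw [← hdist i, Measure.map_apply (hmeas i) measurableSet_Iio]
          rw [this]
          exact measure_mono Set.Iio_subset_Iic_self
      _ = p (Set.Iic (φ n)) ^ n := by
          rw [Finset.prod_const, Finset.card_range]
  have hsum' : (∑' n, μ (A n)) ≠ ⊤ :=
    fun h => hsum (top_le_iff.mp (h ▸ ENNReal.tsum_le_tsum hbound))
  filter_upwards [ae_eventually_notMem hsum'] with ω hω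
  obtain ⟨N, hN⟩ := Filter.eventually_atTop.mp hω
  refine ⟨N, fun n hn => ?_⟩
  have := hN n hn
  simp only [hA, Set.mem_iInter, Set.mem_preimage, Set.mem_Iio, not_forall, not_lt,
    Finset.mem_range] at this
  obtain ⟨i, hi, hphi⟩ := this
  exact hphi.trans (Finset.le_sup (f := fun i => X i ω) (Finset.mem_range.mpr hi))
end
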